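/- For the lattice x(s) = 𝔠₁q^{-s} + 𝔠₂q^s + 𝔠₃ and every nonnegative integer n, the x-average of the monomial z^n satisfies S_x z^n = α_n z^n + û_n z^{n-1} + (lower order terms), where û_n = n(α_{n-1} - α_n) 𝔠₃; i.e., the leading coefficient of S_x z^n is α_n and the next coefficient is û_n. -/

import Mathlib

open Polynomial

noncomputable def alphaSeq (q : ℝ) (n : ℤ) : ℝ :=
  (q ^ ((n : ℝ) / 2) + q ^ (-(n : ℝ) / 2)) / 2

noncomputable def gammaSeq (q : ℝ) (n : ℤ) : ℝ :=
  (q ^ ((n : ℝ) / 2) - q ^ (-(n : ℝ) / 2)) /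
    (q ^ ((1 : ℝ) / 2) - q ^ (-(1 : ℝ) / 2))

noncomputable def latticeX (q : ℝ) (c1 c2 c3 : ℂ) (s : ℝ) : ℂ :=
  c1 * (q : ℂ) ^ (-(s : ℂ)) + c2 * (q : ℂ) ^ ((s : ℂ)) + c3

def IsDx (q : ℝ) (c1 c2 c3 : ℂ) (f Df : Polynomial ℂ) : Prop :=
  ∀ s : ℝ,
    Df.eval (latticeX q c1 c2 c3 s) *
        (latticeX q c1 c2 c3 (s + 1 / 2) - latticeX q c1 c2 c3 (s - 1 / 2)) =
      f.eval (latticeX q c1 c2 c3 (s + 1 / 2)) - f.eval (latticeX q c1 c2 c3 (s - 1 / 2))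

def IsSx (q : ℝ) (c1 c2 c3 : ℂ) (f Sf : Polynomial ℂ) : Prop :=
  ∀ s : ℝ,
    Sf.eval (latticeX q c1 c2 c3 s) =
      (f.eval (latticeX q c1 c2 c3 (s + 1 / 2)) + f.eval (latticeX q c1 c2 c3 (s - 1 / 2))) / 2

namespace SxAux

noncomputable def Ac (q : ℝ) (n : ℤ) : ℂ := ((alphaSeq q n : ℝ) : ℂ)

noncomputable def E (q : ℝ) (s : ℝ) : ℂ := ((q ^ s : ℝ) : ℂ)

lemma Ac_rec (q : ℝ) (hq : 0 < q) (k : ℤ) :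
    Ac q (k+1) + Ac q (k-1) = 2 * Ac q 1 * Ac q k := by
  have key : alphaSeq q (k+1) + alphaSeq q (k-1) = 2 * alphaSeq q 1 * alphaSeq q k := by
    unfold alphaSeq
    push_cast
    rw [show ((k:ℝ)+1)/2 = (k:ℝ)/2 + 1/2 by ring,
        show (-((k:ℝ)+1))/2 = -((k:ℝ)/2) + -(1/2 : ℝ) by ring,
        show ((k:ℝ)-1)/2 = (k:ℝ)/2 + -(1/2 : ℝ) by ring,
        show (-((k:ℝ)-1))/2 = -((k:ℝ)/2) + 1/2 by ring,
        show (-(1:ℝ))/2 = -(1/2 : ℝ) by ring,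
        show (-(k:ℝ))/2 = -((k:ℝ)/2) by ring,
        Real.rpow_add hq, Real.rpow_add hq, Real.rpow_add hq, Real.rpow_add hq,
        Real.rpow_neg hq.le ((k:ℝ)/2), Real.rpow_neg hq.le (1/2)]
    ring
  unfold Ac
  exact_mod_cast key

lemma Ac_zero (q : ℝ) : Ac q 0 = 1 := by
  unfold Ac alphaSeq
  norm_num

lemma E_ne (q : ℝ) (hq : 0 < q) (s : ℝ) : E q s ≠ 0 := by
  unfold E
  exact_mod_cast (Real.rpow_pos_of_pos hq s).ne'

lemma E_add (q : ℝ) (hq : 0 < q) (s t : ℝ) : E q (s+t) = E q s * E q t := by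
  unfold E
  push_cast [Real.rpow_add hq]
  ring

lemma lattice_as (q : ℝ) (hq : 0 < q) (c1 c2 c3 : ℂ) (s : ℝ) :
    latticeX q c1 c2 c3 s = c1 * (E q s)⁻¹ + c2 * E q s + c3 := by
  unfold latticeX E
  rw [Complex.cpow_neg, ← Complex.ofReal_cpow hq.le]

lemma Ac_one (q : ℝ) (hq : 0 < q) : Ac q 1 = (E q (1/2) + (E q (1/2))⁻¹)/2 := by
  unfold Ac alphaSeq E
  rw [show ((1:ℤ):ℝ)/2 = (1/2 : ℝ) by norm_num, show (-((1:ℤ):ℝ))/2 = -(1/2 : ℝ) by norm_num,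
      Real.rpow_neg hq.le]
  push_cast
  ring

lemma Ac_two (q : ℝ) (hq : 0 < q) : Ac q 2 = ((q:ℂ) + (q:ℂ)⁻¹)/2 := by
  unfold Ac alphaSeq
  rw [show ((2:ℤ):ℝ)/2 = (1 : ℝ) by norm_num, show (-((2:ℤ):ℝ))/2 = -(1 : ℝ) by norm_num,
      Real.rpow_neg hq.le, Real.rpow_one]
  push_cast
  ring

lemma E_half_sq (q : ℝ) (hq : 0 < q) : E q (1/2) * E q (1/2) = (q:ℂ) := by
  rw [← E_add q hq]
  unfold E
  norm_num

noncomputable def polyS (q : ℝ) (c3 : ℂ) : Polynomial ℂ :=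
  C 2 * C (Ac q 1) * X + C 2 * C c3 * (1 - C (Ac q 1))

noncomputable def polyP (q : ℝ) (c1 c2 c3 : ℂ) : Polynomial ℂ :=
  (X - C c3)^2 + C 2 * C (Ac q 1) * C c3 * (X - C c3)
    + C 2 * C c1 * C c2 * (C (Ac q 2) - 1) + C c3 ^ 2

lemma polyS_eval (q : ℝ) (hq : 0 < q) (c1 c2 c3 : ℂ) (s : ℝ) :
    (polyS q c3).eval (latticeX q c1 c2 c3 s)
      = latticeX q c1 c2 c3 (s + 1/2) + latticeX q c1 c2 c3 (s - 1/2) := by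
  have h1 : E q (s + 1/2) = E q s * E q (1/2) := E_add q hq s (1/2)
  have h2 : E q (s - 1/2) = E q s * (E q (1/2))⁻¹ := by
    have h := E_add q hq (s - 1/2) (1/2)
    rw [sub_add_cancel] at h
    rw [h, mul_assoc, mul_inv_cancel₀ (E_ne q hq (1/2)), mul_one]
  rw [lattice_as q hq c1 c2 c3 s, lattice_as q hq c1 c2 c3 (s + 1/2),
      lattice_as q hq c1 c2 c3 (s - 1/2), h1, h2]
  simp only [polyS, eval_add, eval_mul, eval_sub, eval_pow, eval_C, eval_X, eval_one,
    Ac_one q hq]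
  set v := E q s with hvdef
  set b := E q (1/2) with hbdef
  have hv : v ≠ 0 := E_ne q hq s
  have hb : b ≠ 0 := E_ne q hq (1/2)
  field_simp
  ring

lemma polyP_eval (q : ℝ) (hq : 0 < q) (c1 c2 c3 : ℂ) (s : ℝ) :
    (polyP q c1 c2 c3).eval (latticeX q c1 c2 c3 s)
      = latticeX q c1 c2 c3 (s + 1/2) * latticeX q c1 c2 c3 (s - 1/2) := by
  have h1 : E q (s + 1/2) = E q s * E q (1/2) := E_add q hq s (1/2)
  have h2 : E q (s - 1/2) = E q s * (E q (1/2))⁻¹ := by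
    have h := E_add q hq (s - 1/2) (1/2)
    rw [sub_add_cancel] at h
    rw [h, mul_assoc, mul_inv_cancel₀ (E_ne q hq (1/2)), mul_one]
  have hq2 : (q:ℂ) = E q (1/2) * E q (1/2) := (E_half_sq q hq).symm
  rw [lattice_as q hq c1 c2 c3 s, lattice_as q hq c1 c2 c3 (s + 1/2),
      lattice_as q hq c1 c2 c3 (s - 1/2), h1, h2]
  simp only [polyP, eval_add, eval_mul, eval_sub, eval_pow, eval_C, eval_X, eval_one,
    Ac_one q hq, Ac_two q hq, hq2]
  set v := E q s with hvdef
  set b := E q (1/2) with hbdef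
  have hv : v ≠ 0 := E_ne q hq s
  have hb : b ≠ 0 := E_ne q hq (1/2)
  field_simp
  ring_nf

noncomputable def polyQ (q : ℝ) (c1 c2 c3 : ℂ) : ℕ → Polynomial ℂ
  | 0 => C 2
  | 1 => polyS q c3
  | (n+2) => polyS q c3 * polyQ q c1 c2 c3 (n+1) - polyP q c1 c2 c3 * polyQ q c1 c2 c3 n

lemma polyQ_eval (q : ℝ) (hq : 0 < q) (c1 c2 c3 : ℂ) (n : ℕ) (s : ℝ) :
    (polyQ q c1 c2 c3 n).eval (latticeX q c1 c2 c3 s)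
      = latticeX q c1 c2 c3 (s + 1/2) ^ n + latticeX q c1 c2 c3 (s - 1/2) ^ n := by
  induction n using Nat.strong_induction_on with
  | _ n ih =>
    match n with
    | 0 => simp [polyQ]; norm_num
    | 1 => simpa [polyQ] using polyS_eval q hq c1 c2 c3 s
    | (m+2) =>
      have h1 := ih (m+1) (by omega)
      have h0 := ih m (by omega)
      simp only [polyQ, eval_sub, eval_mul, polyS_eval q hq c1 c2 c3 s,
        polyP_eval q hq c1 c2 c3 s, h1, h0]
      ring

noncomputable def psiMap (c1 c2 c3 : ℂ) (u : ℝ) : ℂ := c1 * (u:ℂ)⁻¹ + c2 * (u:ℂ) + c3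

lemma psi_injOn (c1 c2 c3 : ℂ) (hc : ¬(c1 = 0 ∧ c2 = 0)) :
    Set.InjOn (psiMap c1 c2 c3) (Set.Ioi (Real.sqrt ‖c1 / c2‖)) := by
  set M := Real.sqrt ‖c1 / c2‖ with hM
  have hM0 : 0 ≤ M := Real.sqrt_nonneg _
  intro u hu v hv huv
  simp only [Set.mem_Ioi] at hu hv
  have hu0 : (0:ℝ) < u := lt_of_le_of_lt hM0 hu
  have hv0 : (0:ℝ) < v := lt_of_le_of_lt hM0 hv
  have hu0' : (u:ℂ) ≠ 0 := by exact_mod_cast hu0.ne'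
  have hv0' : (v:ℂ) ≠ 0 := by exact_mod_cast hv0.ne'
  unfold psiMap at huv
  have key : ((u:ℂ) - v) * (c2 * u * v - c1) = 0 := by
    field_simp at huv
    linear_combination huv
  rcases mul_eq_zero.1 key with h | h
  · exact_mod_cast sub_eq_zero.1 h
  · exfalso
    have hc2 : c2 ≠ 0 := by
      intro h2
      rcases eq_or_ne c1 0 with h1 | h1
      · exact hc ⟨h1, h2⟩
      · apply h1
        have := h
        rw [h2] at this
        simpa using this
    have huv2 : (c1 / c2 : ℂ) = (u:ℂ) * v := by
      field_simp
      linear_combination -h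
    have habs : ‖c1 / c2‖ = u * v := by
      rw [huv2]
      rw [← Complex.ofReal_mul]
      rw [Complex.norm_real, Real.norm_eq_abs]
      exact abs_of_pos (mul_pos hu0 hv0)
    have hMM : M * M = u * v := by
      rw [hM, Real.mul_self_sqrt (norm_nonneg _)]
      exact habs
    have hlt : M * M < u * v := mul_lt_mul'' hu hv hM0 hM0
    exact absurd hMM hlt.ne

lemma polyS_deg (q : ℝ) (c3 : ℂ) : (polyS q c3).degree ≤ 1 := by
  unfold polyS; compute_degree

lemma polyP_deg (q : ℝ) (c1 c2 c3 : ℂ) : (polyP q c1 c2 c3).degree ≤ 2 := by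
  unfold polyP; compute_degree

set_option maxHeartbeats 2000000 in
lemma polyQ_coeff (q : ℝ) (hq : 0 < q) (c1 c2 c3 : ℂ) (n : ℕ) :
    ∃ r : Polynomial ℂ, r.degree < ((n-1 : ℕ) : WithBot ℕ) ∧
      polyQ q c1 c2 c3 n = C 2 * (C (Ac q (n:ℤ)) * X^n
        + C ((n:ℂ) * (Ac q ((n:ℤ)-1) - Ac q (n:ℤ)) * c3) * X^(n-1)) + r := by
  induction n using Nat.strong_induction_on with
  | _ n ih =>
    match n with
    | 0 =>
      refine ⟨0, by simp [Nat.zero_sub, WithBot.bot_lt_coe, degree_zero], ?_⟩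
      simp [polyQ, Ac_zero]
    | 1 =>
      refine ⟨0, by norm_num [degree_zero], ?_⟩
      have e : ((1:ℕ):ℤ) - 1 = 0 := by norm_num
      simp only [polyQ, polyS, e, Ac_zero, pow_one, Nat.sub_self, pow_zero, Nat.cast_one]
      norm_num [Ac_zero]
      simp only [map_mul, map_sub, map_one, map_ofNat]
      ring
    | 2 =>
      have hA2 : C (Ac q 2) = 2 * C (Ac q 1) * C (Ac q 1) - 1 := by
        have h := Ac_rec q hq 1
        norm_num [Ac_zero] at h
        rw [show Ac q 2 = 2 * Ac q 1 * Ac q 1 - 1 by linear_combination h]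
        simp only [map_sub, map_mul, map_one, map_ofNat]
      refine ⟨C ((2*c3*(1 - Ac q 1))^2
          - 2*(c3^2 - 2*(Ac q 1)*c3^2 + 2*c1*c2*(Ac q 2 - 1) + c3^2)), ?_, ?_⟩
      · exact lt_of_le_of_lt (degree_C_le) (by norm_num)
      · have e1 : ((2:ℕ):ℤ) - 1 = 1 := by norm_num
        simp only [polyQ, polyS, polyP, e1, Nat.cast_ofNat]
        simp only [map_mul, map_sub, map_add, map_one, map_ofNat, map_pow]
        rw [hA2]
        ring
    | (k+3) =>
      obtain ⟨r1, hr1, e1⟩ := ih (k+2) (by omega)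
      obtain ⟨r0, hr0, e0⟩ := ih (k+1) (by omega)
      have i1 : ((k+2:ℕ):ℤ) = (k:ℤ)+2 := by push_cast; ring
      have i1' : ((k:ℤ)+2) - 1 = (k:ℤ)+1 := by ring
      have i0 : ((k+1:ℕ):ℤ) = (k:ℤ)+1 := by push_cast; ring
      have i0' : ((k:ℤ)+1) - 1 = (k:ℤ) := by ring
      have j1 : (k+2-1 : ℕ) = k+1 := by omega
      have j0 : (k+1-1 : ℕ) = k := by omega
      rw [i1, i1', j1] at e1
      rw [i0, i0', j0] at e0
      push_cast at e1 e0
      have HA : C (Ac q ((k:ℤ)+3)) =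
          2 * C (Ac q 1) * C (Ac q ((k:ℤ)+2)) - C (Ac q ((k:ℤ)+1)) := by
        have h := Ac_rec q hq ((k:ℤ)+2)
        rw [show (k:ℤ)+2+1 = (k:ℤ)+3 by ring, show (k:ℤ)+2-1 = (k:ℤ)+1 by ring] at h
        rw [show Ac q ((k:ℤ)+3) = 2 * Ac q 1 * Ac q ((k:ℤ)+2) - Ac q ((k:ℤ)+1) by
          linear_combination h]
        simp only [map_sub, map_mul, map_ofNat]
      have HA0 : C (Ac q (k:ℤ)) =
          2 * C (Ac q 1) * C (Ac q ((k:ℤ)+1)) - C (Ac q ((k:ℤ)+2)) := by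
        have h := Ac_rec q hq ((k:ℤ)+1)
        rw [show (k:ℤ)+1+1 = (k:ℤ)+2 by ring, show (k:ℤ)+1-1 = (k:ℤ) by ring] at h
        rw [show Ac q (k:ℤ) = 2 * Ac q 1 * Ac q ((k:ℤ)+1) - Ac q ((k:ℤ)+2) by
          linear_combination h]
        simp only [map_sub, map_mul, map_ofNat]
      set β2 : ℂ := ((k:ℂ)+2) * (Ac q ((k:ℤ)+1) - Ac q ((k:ℤ)+2)) * c3 with hβ2
      set β1 : ℂ := ((k:ℂ)+1) * (Ac q (k:ℤ) - Ac q ((k:ℤ)+1)) * c3 with hβ1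
      refine ⟨C (2*((2*c3*(1 - Ac q 1))*β2
            - (2*(Ac q 1)*c3 - 2*c3)*β1
            - (c3^2 - 2*(Ac q 1)*c3^2 + 2*c1*c2*(Ac q 2 - 1) + c3^2)
                * (Ac q ((k:ℤ)+1)))) * X^(k+1)
          - C (2*(c3^2 - 2*(Ac q 1)*c3^2 + 2*c1*c2*(Ac q 2 - 1) + c3^2)*β1) * X^k
          + polyS q c3 * r1 - polyP q c1 c2 c3 * r0, ?_, ?_⟩
      · rw [j1] at hr1
        rw [j0] at hr0
        rw [show (k+3-1 : ℕ) = k+2 by omega]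
        have d1 : (C (2*((2*c3*(1 - Ac q 1))*β2
            - (2*(Ac q 1)*c3 - 2*c3)*β1
            - (c3^2 - 2*(Ac q 1)*c3^2 + 2*c1*c2*(Ac q 2 - 1) + c3^2)
                * (Ac q ((k:ℤ)+1)))) * X^(k+1)).degree < ((k+2 : ℕ) : WithBot ℕ) :=
          lt_of_le_of_lt (degree_C_mul_X_pow_le _ _) (by exact_mod_cast Nat.lt_succ_self (k+1))
        have d2 : (C (2*(c3^2 - 2*(Ac q 1)*c3^2 + 2*c1*c2*(Ac q 2 - 1) + c3^2)*β1)
            * X^k).degree < ((k+2 : ℕ) : WithBot ℕ) :=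
          lt_of_le_of_lt (degree_C_mul_X_pow_le _ _) (by exact_mod_cast by omega)
        have d3 : (polyS q c3 * r1).degree < ((k+2 : ℕ) : WithBot ℕ) := by
          refine lt_of_le_of_lt (degree_mul_le _ _) ?_
          refine lt_of_le_of_lt (add_le_add_left (polyS_deg q c3) _) ?_
          have h1 : ((1:ℕ) : WithBot ℕ) + r1.degree < ((1:ℕ) : WithBot ℕ) + ((k+1 : ℕ) : WithBot ℕ) :=
            WithBot.add_lt_add_left (by simp) hr1
          have h2 : ((1:ℕ) : WithBot ℕ) + ((k+1 : ℕ) : WithBot ℕ) = ((k+2 : ℕ) : WithBot ℕ) := by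
            norm_cast
            omega
          rw [← h2]
          simpa using h1
        have d4 : (polyP q c1 c2 c3 * r0).degree < ((k+2 : ℕ) : WithBot ℕ) := by
          refine lt_of_le_of_lt (degree_mul_le _ _) ?_
          refine lt_of_le_of_lt (add_le_add_left (polyP_deg q c1 c2 c3) _) ?_
          have h1 : ((2:ℕ) : WithBot ℕ) + r0.degree < ((2:ℕ) : WithBot ℕ) + ((k : ℕ) : WithBot ℕ) :=
            WithBot.add_lt_add_left (by simp) hr0
          have h2 : ((2:ℕ) : WithBot ℕ) + ((k : ℕ) : WithBot ℕ) = ((k+2 : ℕ) : WithBot ℕ) := by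
            norm_cast
            omega
          rw [← h2]
          simpa using h1
        refine lt_of_le_of_lt (degree_sub_le _ _) (max_lt (lt_of_le_of_lt (degree_add_le _ _)
          (max_lt (lt_of_le_of_lt (degree_sub_le _ _) (max_lt d1 d2)) d3)) d4)
      · have hdef : polyQ q c1 c2 c3 (k+3)
            = polyS q c3 * polyQ q c1 c2 c3 (k+2) - polyP q c1 c2 c3 * polyQ q c1 c2 c3 (k+1) := rfl
        rw [hdef, e1, e0]
        have i2 : ((k+3:ℕ):ℤ) = (k:ℤ)+3 := by push_cast; ring
        have i2' : ((k:ℤ)+3) - 1 = (k:ℤ)+2 := by ring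
        have j2 : (k+3-1 : ℕ) = k+2 := by omega
        rw [i2, i2', j2]
        push_cast
        simp only [polyS, polyP, hβ2, hβ1]
        simp only [map_mul, map_sub, map_add, map_one, map_ofNat, map_pow]
        rw [HA, HA0]
        ring

end SxAux

open SxAux in
theorem Sx_monomial_leading_coeffs (q : ℝ) (hq : 0 < q) (hq1 : q ≠ 1)
    (c1 c2 c3 : ℂ) (hc : ¬(c1 = 0 ∧ c2 = 0)) (n : ℕ) (Sf : Polynomial ℂ)
    (hSf : IsSx q c1 c2 c3 (X ^ n) Sf) :
    ∃ r : Polynomial ℂ, r.degree < ((n - 1 : ℕ) : WithBot ℕ) ∧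
      Sf = C ((alphaSeq q (n : ℤ) : ℝ) : ℂ) * X ^ n +
        C ((n : ℂ) * (((alphaSeq q ((n : ℤ) - 1) : ℝ) : ℂ) -
            ((alphaSeq q (n : ℤ) : ℝ) : ℂ)) * c3) * X ^ (n - 1) + r := by
  have hS : Sf = C (2⁻¹ : ℂ) * polyQ q c1 c2 c3 n := by
    apply Polynomial.eq_of_infinite_eval_eq
    have hinf : (psiMap c1 c2 c3 '' Set.Ioi (Real.sqrt ‖c1 / c2‖)).Infinite :=
      (Set.Ioi_infinite _).image (psi_injOn c1 c2 c3 hc)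
    refine Set.Infinite.mono ?_ hinf
    rintro _ ⟨u, hu, rfl⟩
    simp only [Set.mem_Ioi] at hu
    have hu0 : (0:ℝ) < u := lt_of_le_of_lt (Real.sqrt_nonneg _) hu
    set s := Real.logb q u with hs
    have hqs : q ^ s = u := Real.rpow_logb hq hq1 hu0
    have hx : psiMap c1 c2 c3 u = latticeX q c1 c2 c3 s := by
      rw [lattice_as q hq c1 c2 c3 s]
      unfold psiMap E
      rw [hqs]
    simp only [Set.mem_setOf_eq]
    rw [hx, hSf s]
    simp only [eval_mul, eval_C, eval_pow, eval_X, polyQ_eval q hq c1 c2 c3 n s]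
    ring
  obtain ⟨r, hr, hQ⟩ := polyQ_coeff q hq c1 c2 c3 n
  refine ⟨C (2⁻¹ : ℂ) * r, ?_, ?_⟩
  · refine lt_of_le_of_lt ?_ hr
    refine le_trans (degree_mul_le _ _) ?_
    simpa using add_le_add_left (degree_C_le) r.degree
  · rw [hS, hQ]
    have h12 : (C (2⁻¹:ℂ)) * C (2:ℂ) = 1 := by
      rw [← C_mul]
      norm_num
    have hAc : ∀ m : ℤ, Ac q m = ((alphaSeq q m : ℝ) : ℂ) := fun _ => rfl
    rw [← hAc (n:ℤ), ← hAc ((n:ℤ)-1)]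
    linear_combination (C (Ac q (n:ℤ)) * X^n
      + C ((n:ℂ) * (Ac q ((n:ℤ)-1) - Ac q (n:ℤ)) * c3) * X^(n-1)) * h12
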